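/- For any 2×2 complex matrix A, with D^ℝ(A) = (A + A*)/2 + i·A*A, the identity (U_{D^ℝ(A)})² - |D_{D^ℝ(A)}|² = 2(U_A - |D_A|)(U_A + |D_A|)(U_A - |D_A| + 2E_A) holds. -/

import Mathlib

open Matrix

noncomputable def UA (A : Matrix (Fin 2) (Fin 2) ℂ) : ℝ :=
  (Matrix.trace (Aᴴ * A)).re / 2 - (‖Matrix.trace A‖) ^ 2 / 4

noncomputable def DA (A : Matrix (Fin 2) (Fin 2) ℂ) : ℂ :=
  A.det - (Matrix.trace A) ^ 2 / 4

noncomputable def EA (A : Matrix (Fin 2) (Fin 2) ℂ) : ℝ :=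
  ((Matrix.trace A).im / 2) ^ 2 + (‖DA A‖ - (DA A).re) / 2

/-- The real double of `A`. -/
noncomputable def realDouble (A : Matrix (Fin 2) (Fin 2) ℂ) : Matrix (Fin 2) (Fin 2) ℂ :=
  (2 : ℂ)⁻¹ • (A + Aᴴ) + Complex.I • (Aᴴ * A)

set_option maxHeartbeats 1000000 in
private lemma aux (α β u1 u2 u3 v1 v2 v3 : ℝ) (A : Matrix (Fin 2) (Fin 2) ℂ)
    (h00 : A 0 0 = (α/2 + u3 : ℝ) + (β/2 + v3 : ℝ) * Complex.I)
    (h01 : A 0 1 = (u1 + v2 : ℝ) + (v1 - u2 : ℝ) * Complex.I)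
    (h10 : A 1 0 = (u1 - v2 : ℝ) + (v1 + u2 : ℝ) * Complex.I)
    (h11 : A 1 1 = (α/2 - u3 : ℝ) + (β/2 - v3 : ℝ) * Complex.I) :
    (UA (realDouble A)) ^ 2 - (‖DA (realDouble A)‖) ^ 2 =
      2 * (UA A - ‖DA A‖) * (UA A + ‖DA A‖)
        * (UA A - ‖DA A‖ + 2 * EA A) := by
  have sq1 : (‖DA (realDouble A)‖)^2 = Complex.normSq (DA (realDouble A)) :=
    Complex.sq_norm _
  have sq2 : (‖DA A‖)^2 = Complex.normSq (DA A) := Complex.sq_norm _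
  set k1 := α*u1 + β*v1 - 2*(u2*v3 - u3*v2) with hk1
  set k2 := α*u2 + β*v2 - 2*(u3*v1 - u1*v3) with hk2
  set k3 := α*u3 + β*v3 - 2*(u1*v2 - u2*v1) with hk3
  set m := (α^2+β^2)/4 + (u1^2+u2^2+u3^2) + (v1^2+v2^2+v3^2) with hm
  have ext : ∀ (z : ℂ) (x y : ℝ), z.re = x → z.im = y → z = (x:ℝ) + (y:ℝ)*Complex.I := by
    intro z x y hx hy
    apply Complex.ext <;> simp [← hx, ← hy]
  have b00 : realDouble A 0 0 = (α/2 + u3 : ℝ) + (m + k3 : ℝ) * Complex.I := by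
    apply ext <;>
    · simp only [realDouble, Matrix.mul_apply, Fin.sum_univ_two,
        Matrix.conjTranspose_apply, Matrix.add_apply, Matrix.smul_apply,
        h00, h01, h10, h11, smul_eq_mul, hk1, hk2, hk3, hm,
        Complex.add_re, Complex.add_im, Complex.mul_re, Complex.mul_im,
        Complex.I_re, Complex.I_im, Complex.inv_re, Complex.inv_im,
        Complex.re_ofNat, Complex.im_ofNat, Complex.normSq_ofNat,
        Complex.conj_re, Complex.conj_im, Complex.star_def, _root_.map_add, _root_.map_mul, _root_.map_sub, Complex.conj_ofReal, Complex.conj_I, Complex.neg_re, Complex.neg_im, Complex.ofReal_re, Complex.ofReal_im]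
      ring
  have b01 : realDouble A 0 1 = (u1 + k2 : ℝ) + (k1 - u2 : ℝ) * Complex.I := by
    apply ext <;>
    · simp only [realDouble, Matrix.mul_apply, Fin.sum_univ_two,
        Matrix.conjTranspose_apply, Matrix.add_apply, Matrix.smul_apply,
        h00, h01, h10, h11, smul_eq_mul, hk1, hk2, hk3, hm,
        Complex.add_re, Complex.add_im, Complex.mul_re, Complex.mul_im,
        Complex.I_re, Complex.I_im, Complex.inv_re, Complex.inv_im,
        Complex.re_ofNat, Complex.im_ofNat, Complex.normSq_ofNat,
        Complex.conj_re, Complex.conj_im, Complex.star_def, _root_.map_add, _root_.map_mul, _root_.map_sub, Complex.conj_ofReal, Complex.conj_I, Complex.neg_re, Complex.neg_im, Complex.ofReal_re, Complex.ofReal_im]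
      ring
  have b10 : realDouble A 1 0 = (u1 - k2 : ℝ) + (k1 + u2 : ℝ) * Complex.I := by
    apply ext <;>
    · simp only [realDouble, Matrix.mul_apply, Fin.sum_univ_two,
        Matrix.conjTranspose_apply, Matrix.add_apply, Matrix.smul_apply,
        h00, h01, h10, h11, smul_eq_mul, hk1, hk2, hk3, hm,
        Complex.add_re, Complex.add_im, Complex.mul_re, Complex.mul_im,
        Complex.I_re, Complex.I_im, Complex.inv_re, Complex.inv_im,
        Complex.re_ofNat, Complex.im_ofNat, Complex.normSq_ofNat,
        Complex.conj_re, Complex.conj_im, Complex.star_def, _root_.map_add, _root_.map_mul, _root_.map_sub, Complex.conj_ofReal, Complex.conj_I, Complex.neg_re, Complex.neg_im, Complex.ofReal_re, Complex.ofReal_im]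
      ring
  have b11 : realDouble A 1 1 = (α/2 - u3 : ℝ) + (m - k3 : ℝ) * Complex.I := by
    apply ext <;>
    · simp only [realDouble, Matrix.mul_apply, Fin.sum_univ_two,
        Matrix.conjTranspose_apply, Matrix.add_apply, Matrix.smul_apply,
        h00, h01, h10, h11, smul_eq_mul, hk1, hk2, hk3, hm,
        Complex.add_re, Complex.add_im, Complex.mul_re, Complex.mul_im,
        Complex.I_re, Complex.I_im, Complex.inv_re, Complex.inv_im,
        Complex.re_ofNat, Complex.im_ofNat, Complex.normSq_ofNat,
        Complex.conj_re, Complex.conj_im, Complex.star_def, _root_.map_add, _root_.map_mul, _root_.map_sub, Complex.conj_ofReal, Complex.conj_I, Complex.neg_re, Complex.neg_im, Complex.ofReal_re, Complex.ofReal_im]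
      ring
  have hUB : UA (realDouble A) = (u1^2+u2^2+u3^2) + (k1^2+k2^2+k3^2) := by
    unfold UA
    rw [Complex.sq_norm]
    simp only [Matrix.trace_fin_two, Matrix.mul_apply, Fin.sum_univ_two,
      Matrix.conjTranspose_apply, b00, b01, b10, b11,
      Complex.add_re, Complex.add_im, Complex.mul_re, Complex.mul_im,
      Complex.I_re, Complex.I_im, Complex.conj_re, Complex.conj_im, Complex.star_def, _root_.map_add, _root_.map_mul, _root_.map_sub, Complex.conj_ofReal, Complex.conj_I, Complex.neg_re, Complex.neg_im,
      Complex.ofReal_re, Complex.ofReal_im, Complex.normSq_apply]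
    ring
  have hBre : (DA (realDouble A)).re = (k1^2+k2^2+k3^2) - (u1^2+u2^2+u3^2) := by
    unfold DA
    simp only [Matrix.trace_fin_two, Matrix.det_fin_two, b00, b01, b10, b11,
      Complex.add_re, Complex.add_im, Complex.mul_re, Complex.mul_im,
      Complex.sub_re, Complex.sub_im, Complex.I_re, Complex.I_im,
      Complex.ofReal_re, Complex.ofReal_im, Complex.div_re, Complex.div_im,
      Complex.re_ofNat, Complex.im_ofNat, Complex.normSq_ofNat, pow_two]
    ring
  have hBim : (DA (realDouble A)).im = -(2*(u1*k1 + u2*k2 + u3*k3)) := by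
    unfold DA
    simp only [Matrix.trace_fin_two, Matrix.det_fin_two, b00, b01, b10, b11,
      Complex.add_re, Complex.add_im, Complex.mul_re, Complex.mul_im,
      Complex.sub_re, Complex.sub_im, Complex.I_re, Complex.I_im,
      Complex.ofReal_re, Complex.ofReal_im, Complex.div_re, Complex.div_im,
      Complex.re_ofNat, Complex.im_ofNat, Complex.normSq_ofNat, pow_two]
    ring
  have hU : UA A = (u1^2+u2^2+u3^2) + (v1^2+v2^2+v3^2) := by
    unfold UA
    rw [Complex.sq_norm]
    simp only [Matrix.trace_fin_two, Matrix.mul_apply, Fin.sum_univ_two,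
      Matrix.conjTranspose_apply, h00, h01, h10, h11,
      Complex.add_re, Complex.add_im, Complex.mul_re, Complex.mul_im,
      Complex.I_re, Complex.I_im, Complex.conj_re, Complex.conj_im, Complex.star_def, _root_.map_add, _root_.map_mul, _root_.map_sub, Complex.conj_ofReal, Complex.conj_I, Complex.neg_re, Complex.neg_im,
      Complex.ofReal_re, Complex.ofReal_im, Complex.normSq_apply]
    ring
  have hDre : (DA A).re = (v1^2+v2^2+v3^2) - (u1^2+u2^2+u3^2) := by
    unfold DA
    simp only [Matrix.trace_fin_two, Matrix.det_fin_two, h00, h01, h10, h11,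
      Complex.add_re, Complex.add_im, Complex.mul_re, Complex.mul_im,
      Complex.sub_re, Complex.sub_im, Complex.I_re, Complex.I_im,
      Complex.ofReal_re, Complex.ofReal_im, Complex.div_re, Complex.div_im,
      Complex.re_ofNat, Complex.im_ofNat, Complex.normSq_ofNat, pow_two]
    ring
  have hDim : (DA A).im = -(2*(u1*v1 + u2*v2 + u3*v3)) := by
    unfold DA
    simp only [Matrix.trace_fin_two, Matrix.det_fin_two, h00, h01, h10, h11,
      Complex.add_re, Complex.add_im, Complex.mul_re, Complex.mul_im,
      Complex.sub_re, Complex.sub_im, Complex.I_re, Complex.I_im,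
      Complex.ofReal_re, Complex.ofReal_im, Complex.div_re, Complex.div_im,
      Complex.re_ofNat, Complex.im_ofNat, Complex.normSq_ofNat, pow_two]
    ring
  have htim : (Matrix.trace A).im = β := by
    simp only [Matrix.trace_fin_two, h00, h11, Complex.add_im, Complex.mul_im,
      Complex.I_re, Complex.I_im, Complex.ofReal_re, Complex.ofReal_im]
    ring
  have key : 2 * (UA A - ‖DA A‖) * (UA A + ‖DA A‖)
      * (UA A - ‖DA A‖ + 2*EA A)
      = 2 * (UA A ^2 - Complex.normSq (DA A)) * (UA A + ((Matrix.trace A).im)^2/2 - (DA A).re) := by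
    rw [← sq2]; unfold EA; ring
  rw [sq1, key, Complex.normSq_apply, Complex.normSq_apply, hUB, hBre, hBim, hU, hDre, hDim, htim,
    hk1, hk2, hk3]
  ring


theorem UA_DA_realDouble_identity (A : Matrix (Fin 2) (Fin 2) ℂ) :
    (UA (realDouble A)) ^ 2 - (‖DA (realDouble A)‖) ^ 2 =
      2 * (UA A - ‖DA A‖) * (UA A + ‖DA A‖)
        * (UA A - ‖DA A‖ + 2 * EA A) := by
  refine aux ((A 0 0).re + (A 1 1).re) ((A 0 0).im + (A 1 1).im)
    (((A 0 1).re + (A 1 0).re)/2) (((A 1 0).im - (A 0 1).im)/2) (((A 0 0).re - (A 1 1).re)/2)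
    (((A 0 1).im + (A 1 0).im)/2) (((A 0 1).re - (A 1 0).re)/2) (((A 0 0).im - (A 1 1).im)/2)
    A ?_ ?_ ?_ ?_ <;>
  · apply Complex.ext <;>
    · simp only [Complex.add_re, Complex.add_im, Complex.mul_re, Complex.mul_im,
        Complex.I_re, Complex.I_im, Complex.ofReal_re, Complex.ofReal_im]
      ring
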